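/- Let f : ℝⁿ → ℝ be convex and differentiable, ψ : ℝⁿ → ℝ ∪ {+∞} convex, proper, and closed, F = f + ψ with minimizer x* and optimal value F* = F(x*), and suppose F satisfies μ-optimal-set strong convexity at x with respect to x* for some μ > 0. Let H be a symmetric matrix with σI ⪯ H ⪯ MI for some M ≥ σ > 0, let γ ∈ (0,1), η ∈ [0,1), α ∈ (0,1], and suppose d satisfies Q(d) ≤ (1 − η)Q* and the Armijo condition F(x + αd) ≤ F(x) + αγΔ holds. Then F(x + αd) − F* ≤ (1 − αγ(1 − η)μ/(μ + ‖H‖))·(F(x) − F*). -/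

import Mathlib

/-
Setting: minimize F = f + ψ over ℝⁿ (modeled as `EuclideanSpace ℝ (Fin n)`), where
f : ℝⁿ → ℝ is smooth and ψ : ℝⁿ → ℝ ∪ {+∞} (modeled as `EReal`-valued, never ⊥)
is convex, proper and closed.  The quadratic model at x with symmetric operator H is
Q(d) = ⟪∇f(x), d⟫ + (1/2)⟪H d, d⟫ + ψ(x+d) − ψ(x), and Δ(d) = ⟪∇f(x), d⟫ + ψ(x+d) − ψ(x).
-/

open scoped RealInnerProductSpace
open Set Filter Topology

noncomputable section

/-- Convexity for extended-real-valued functions (values in ℝ ∪ {±∞}). -/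
def ConvexE {n : ℕ} (g : EuclideanSpace ℝ (Fin n) → EReal) : Prop :=
  ∀ x y : EuclideanSpace ℝ (Fin n), ∀ a b : ℝ, 0 ≤ a → 0 ≤ b → a + b = 1 →
    g (a • x + b • y) ≤ (a : EReal) * g x + (b : EReal) * g y

/-- ψ is proper: it never takes the value −∞ (its values lie in ℝ ∪ {+∞})
and it is finite somewhere. -/
def ProperPsi {n : ℕ} (ψ : EuclideanSpace ℝ (Fin n) → EReal) : Prop :=
  (∀ x, ψ x ≠ ⊥) ∧ ∃ x, ψ x ≠ ⊤

/-- ψ is closed, i.e. lower semicontinuous. -/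
def ClosedPsi {n : ℕ} (ψ : EuclideanSpace ℝ (Fin n) → EReal) : Prop :=
  LowerSemicontinuous ψ

/-- H is a symmetric (self-adjoint) linear operator. -/
def SymmCLM {n : ℕ} (H : EuclideanSpace ℝ (Fin n) →L[ℝ] EuclideanSpace ℝ (Fin n)) : Prop :=
  ∀ u v, ⟪H u, v⟫ = ⟪u, H v⟫

/-- m is the smallest eigenvalue of the symmetric operator H
(characterized as the minimum of the Rayleigh quotient over the unit sphere). -/
def IsSmallestEigenvalue {n : ℕ} (H : EuclideanSpace ℝ (Fin n) →L[ℝ] EuclideanSpace ℝ (Fin n))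
    (m : ℝ) : Prop :=
  IsLeast {r : ℝ | ∃ u : EuclideanSpace ℝ (Fin n), ‖u‖ = 1 ∧ r = ⟪H u, u⟫} m

/-- The objective F = f + ψ (extended-real-valued). -/
def Fm {n : ℕ} (f : EuclideanSpace ℝ (Fin n) → ℝ) (ψ : EuclideanSpace ℝ (Fin n) → EReal)
    (x : EuclideanSpace ℝ (Fin n)) : EReal :=
  (f x : EReal) + ψ x

/-- The quadratic model Q(d) = ∇f(x)ᵀd + (1/2)dᵀHd + ψ(x+d) − ψ(x). -/
def Qm {n : ℕ} (f : EuclideanSpace ℝ (Fin n) → ℝ) (ψ : EuclideanSpace ℝ (Fin n) → EReal)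
    (H : EuclideanSpace ℝ (Fin n) →L[ℝ] EuclideanSpace ℝ (Fin n))
    (x d : EuclideanSpace ℝ (Fin n)) : EReal :=
  ((⟪gradient f x, d⟫ + 1 / 2 * ⟪H d, d⟫ : ℝ) : EReal) + ψ (x + d) - ψ x

/-- Δ(d) = ∇f(x)ᵀd + ψ(x+d) − ψ(x). -/
def Dm {n : ℕ} (f : EuclideanSpace ℝ (Fin n) → ℝ) (ψ : EuclideanSpace ℝ (Fin n) → EReal)
    (x d : EuclideanSpace ℝ (Fin n)) : EReal :=
  ((⟪gradient f x, d⟫ : ℝ) : EReal) + ψ (x + d) - ψ x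

/-- g is σ-strongly convex: g − (σ/2)‖·‖² is convex. -/
def StrongConvexE {n : ℕ} (σ : ℝ) (g : EuclideanSpace ℝ (Fin n) → EReal) : Prop :=
  ConvexE (fun d => g d - ((σ / 2 * ‖d‖ ^ 2 : ℝ) : EReal))

/-- The solution set Ω = argmin F. -/
def SolSet {n : ℕ} (f : EuclideanSpace ℝ (Fin n) → ℝ)
    (ψ : EuclideanSpace ℝ (Fin n) → EReal) : Set (EuclideanSpace ℝ (Fin n)) :=
  {y | ∀ z, Fm f ψ y ≤ Fm f ψ z}

/-- With f convex differentiable, x* a minimizer of F, F satisfying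
μ-optimal-set strong convexity at x (μ > 0), σI ⪯ H ⪯ MI (M ≥ σ > 0), γ ∈ (0,1),
η ∈ [0,1), α ∈ (0,1], if Q(d) ≤ (1 − η)Q* and the Armijo condition
F(x + αd) ≤ F(x) + αγΔ holds, then
F(x + αd) − F* ≤ (1 − αγ(1 − η)μ/(μ + ‖H‖))(F(x) − F*). -/
lemma helperA (p : EReal) (c K : ℝ) (hb : p ≠ ⊥) (h : (c : EReal) + p ≤ (K : EReal)) :
    ∃ s : ℝ, p = (s : EReal) ∧ c + s ≤ K := by
  have ht : p ≠ ⊤ := by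
    rintro rfl
    simp [EReal.add_top_of_ne_bot] at h
  refine ⟨p.toReal, (EReal.coe_toReal ht hb).symm, ?_⟩
  rw [← EReal.coe_toReal ht hb] at h
  exact_mod_cast h

lemma helperB (p : EReal) (c r K : ℝ) (hb : p ≠ ⊥)
    (h : (c : EReal) + p - (r : EReal) ≤ (K : EReal)) :
    ∃ s : ℝ, p = (s : EReal) ∧ c + s - r ≤ K := by
  have ht : p ≠ ⊤ := by
    rintro rfl
    rw [EReal.add_top_of_ne_bot (by simp), EReal.top_sub_coe] at h
    simp at h
  refine ⟨p.toReal, (EReal.coe_toReal ht hb).symm, ?_⟩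
  rw [← EReal.coe_toReal ht hb] at h
  exact_mod_cast h

lemma grad_conv {n : ℕ} (f : EuclideanSpace ℝ (Fin n) → ℝ) (hf : Differentiable ℝ f)
    (hc : ConvexOn ℝ Set.univ f) (x e : EuclideanSpace ℝ (Fin n)) :
    ⟪gradient f x, e⟫ ≤ f (x + e) - f x := by
  set g : ℝ → ℝ := fun t => f (x + t • e) with hg
  have hgc : ConvexOn ℝ Set.univ g := by
    have := hc.comp_affineMap (AffineMap.lineMap x (x + e) : ℝ →ᵃ[ℝ] EuclideanSpace ℝ (Fin n))
    convert this using 1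
    · rfl
    · rfl
    · rfl
    · rfl
    · rfl
    funext t
    simp only [hg, Function.comp_apply, AffineMap.lineMap_apply, vsub_eq_sub,
      add_sub_cancel_left, vadd_eq_add]
    rw [add_comm]
  have h1 : HasDerivAt (fun t : ℝ => x + t • e) e 0 := by
    simpa using ((hasDerivAt_id (0:ℝ)).smul_const e).const_add x
  have h2 : HasDerivAt g (fderiv ℝ f (x + (0:ℝ) • e) e) 0 :=
    (hf (x + (0:ℝ) • e)).hasFDerivAt.comp_hasDerivAt 0 h1
  have h3 : fderiv ℝ f (x + (0:ℝ) • e) e = ⟪gradient f x, e⟫ := by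
    have h4 := hasGradientAt_iff_hasFDerivAt.mp (hf x).hasGradientAt
    simp only [zero_smul, add_zero]
    rw [h4.fderiv]
    simp
  rw [h3] at h2
  have := hgc.le_slope_of_hasDerivAt (Set.mem_univ (0:ℝ)) (Set.mem_univ 1) one_pos h2
  simpa [slope, hg] using this

set_option maxHeartbeats 1000000 in
theorem linear_rate_step_armijo {n : ℕ}
    (f : EuclideanSpace ℝ (Fin n) → ℝ) (ψ : EuclideanSpace ℝ (Fin n) → EReal)
    (H : EuclideanSpace ℝ (Fin n) →L[ℝ] EuclideanSpace ℝ (Fin n))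
    (x xstar d : EuclideanSpace ℝ (Fin n)) (μ σ M γ η α : ℝ)
    (hf : Differentiable ℝ f) (hfconv : ConvexOn ℝ Set.univ f)
    (hψconv : ConvexE ψ) (hψproper : ProperPsi ψ) (hψclosed : ClosedPsi ψ)
    (hdom : ψ x ≠ ⊤)
    (hmin : ∀ y, Fm f ψ xstar ≤ Fm f ψ y)
    (hμ : 0 < μ)
    (hossc : ∀ lam : ℝ, lam ∈ Set.Icc (0 : ℝ) 1 →
        Fm f ψ (lam • x + (1 - lam) • xstar) ≤
          ((lam : ℝ) : EReal) * Fm f ψ x + ((1 - lam : ℝ) : EReal) * Fm f ψ xstar -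
            ((μ * lam * (1 - lam) / 2 * ‖x - xstar‖ ^ 2 : ℝ) : EReal))
    (hH : SymmCLM H) (hσ : 0 < σ) (hσM : σ ≤ M)
    (hHlb : ∀ e : EuclideanSpace ℝ (Fin n), σ * ‖e‖ ^ 2 ≤ ⟪H e, e⟫)
    (hHub : ∀ e : EuclideanSpace ℝ (Fin n), ⟪H e, e⟫ ≤ M * ‖e‖ ^ 2)
    (hγ0 : 0 < γ) (hγ1 : γ < 1) (hη0 : 0 ≤ η) (hη1 : η < 1)
    (hα0 : 0 < α) (hα1 : α ≤ 1)
    (happrox : Qm f ψ H x d ≤ ((1 - η : ℝ) : EReal) * ⨅ e, Qm f ψ H x e)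
    (harmijo : Fm f ψ (x + α • d) ≤ Fm f ψ x + ((α * γ : ℝ) : EReal) * Dm f ψ x d) :
    Fm f ψ (x + α • d) - Fm f ψ xstar ≤
      ((1 - α * γ * (1 - η) * μ / (μ + ‖H‖) : ℝ) : EReal) * (Fm f ψ x - Fm f ψ xstar) := by
  obtain ⟨hψbot, -⟩ := hψproper
  -- ψ x is real
  obtain ⟨rx, hrx⟩ : ∃ r : ℝ, ψ x = (r : EReal) :=
    ⟨(ψ x).toReal, (EReal.coe_toReal hdom (hψbot x)).symm⟩
  have hFx : Fm f ψ x = ((f x + rx : ℝ) : EReal) := by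
    show (f x : EReal) + ψ x = _
    rw [hrx]; norm_cast
  set Fx : ℝ := f x + rx with hFxdef
  -- F* is real
  have hs1 : (f xstar : EReal) + ψ xstar ≤ ((Fx : ℝ) : EReal) := by
    have := hmin x
    rw [hFx] at this
    exact this
  obtain ⟨rs, hrs, hFsx0⟩ := helperA (ψ xstar) (f xstar) Fx (hψbot xstar) hs1
  set Fs : ℝ := f xstar + rs with hFsdef
  have hFs : Fm f ψ xstar = ((Fs : ℝ) : EReal) := by
    show (f xstar : EReal) + ψ xstar = _
    rw [hrs, hFsdef]; norm_cast
  have hFsx : Fs ≤ Fx := hFsx0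
  -- lambda
  have hHnn : (0:ℝ) ≤ ‖H‖ := norm_nonneg _
  have hden : (0:ℝ) < μ + ‖H‖ := by linarith
  set lam : ℝ := μ / (μ + ‖H‖) with hlamdef
  have hlam0 : 0 < lam := div_pos hμ hden
  have hlam1 : lam ≤ 1 := by
    rw [hlamdef, div_le_one hden]; linarith
  set e : EuclideanSpace ℝ (Fin n) := lam • (xstar - x) with hedef
  have hxe : (1 - lam) • x + (1 - (1 - lam)) • xstar = x + e := by
    rw [hedef]; module
  -- optimal-set strong convexity at 1 - lam
  have hkey := hossc (1 - lam) ⟨by linarith, by linarith⟩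
  rw [hxe, hFx, hFs] at hkey
  have hkey2 : (f (x + e) : EReal) + ψ (x + e) ≤
      (((1 - lam) * Fx + (1 - (1 - lam)) * Fs - μ * (1 - lam) * (1 - (1 - lam)) / 2 * ‖x - xstar‖ ^ 2
        : ℝ) : EReal) := by
    refine le_trans hkey (le_of_eq ?_)
    push_cast
    ring_nf
  obtain ⟨re, hre, hA⟩ := helperA (ψ (x + e)) (f (x + e)) _ (hψbot _) hkey2
  -- bound on Q at e
  set D : ℝ := ‖x - xstar‖ ^ 2 with hDdef
  have hnorme : ‖e‖ = lam * ‖x - xstar‖ := by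
    rw [hedef, norm_smul, norm_sub_rev, Real.norm_eq_abs, abs_of_pos hlam0]
  have hHe : ⟪H e, e⟫ ≤ ‖H‖ * (lam ^ 2 * D) := by
    have h1 := real_inner_le_norm (H e) e
    have h2 := H.le_opNorm e
    have h3 : ‖e‖ ^ 2 = lam ^ 2 * D := by rw [hnorme, hDdef]; ring
    nlinarith [norm_nonneg e, norm_nonneg (H e)]
  have hgrad : ⟪gradient f x, e⟫ ≤ f (x + e) - f x := grad_conv f hf hfconv x e
  have hzero : lam ^ 2 * ‖H‖ - μ * lam * (1 - lam) = 0 := by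
    have hmc : lam * (μ + ‖H‖) = μ := div_mul_cancel₀ _ (ne_of_gt hden)
    linear_combination lam * hmc
  have hQe : Qm f ψ H x e ≤ ((lam * (Fs - Fx) : ℝ) : EReal) := by
    simp only [Qm]
    rw [hre, hrx]
    norm_cast
    have hA' : f (x + e) + re ≤
        (1 - lam) * Fx + (1 - (1 - lam)) * Fs -
          μ * (1 - lam) * (1 - (1 - lam)) / 2 * D := hA
    nlinarith [hA', hgrad, hHe, hzero]
  have hQstar : (⨅ e', Qm f ψ H x e') ≤ ((lam * (Fs - Fx) : ℝ) : EReal) :=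
    le_trans (iInf_le _ e) hQe
  -- bound on Q(d)
  set K : ℝ := (1 - η) * (lam * (Fs - Fx)) with hKdef
  have happrox2 : Qm f ψ H x d ≤ ((K : ℝ) : EReal) := by
    refine le_trans happrox ?_
    rw [hKdef, EReal.coe_mul]
    exact mul_le_mul_of_nonneg_left hQstar (by exact_mod_cast (by linarith : (0:ℝ) ≤ 1 - η))
  simp only [Qm] at happrox2
  rw [hrx] at happrox2
  obtain ⟨rd, hrd, hQd⟩ := helperB _ _ _ _ (hψbot (x + d)) happrox2
  have hq0 : (0:ℝ) ≤ ⟪H d, d⟫ := le_trans (by positivity) (hHlb d)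
  have hDr : ⟪gradient f x, d⟫ + rd - rx ≤ K := by linarith
  -- Armijo
  have hDm : Dm f ψ x d = ((⟪gradient f x, d⟫ + rd - rx : ℝ) : EReal) := by
    simp only [Dm]
    rw [hrd, hrx]; norm_cast
  have harm2 : (f (x + α • d) : EReal) + ψ (x + α • d) ≤
      ((Fx + α * γ * (⟪gradient f x, d⟫ + rd - rx) : ℝ) : EReal) := by
    refine le_trans harmijo (le_of_eq ?_)
    rw [hFx, hDm]
    norm_cast
  obtain ⟨ra, hra, hFa⟩ := helperA _ _ _ (hψbot (x + α • d)) harm2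
  -- conclude
  have hFma : Fm f ψ (x + α • d) = ((f (x + α • d) + ra : ℝ) : EReal) := by
    show (f (x + α • d) : EReal) + ψ (x + α • d) = _
    rw [hra]; norm_cast
  rw [hFma, hFs, hFx]
  norm_cast
  have hDrK : α * γ * (⟪gradient f x, d⟫ + rd - rx) ≤ α * γ * K :=
    mul_le_mul_of_nonneg_left hDr (by positivity)
  have hgoal : f (x + α • d) + ra - Fs ≤ (1 - α * γ * (1 - η) * lam) * (Fx - Fs) := by
    rw [hKdef] at hDrK
    nlinarith [hFa, hDrK]
  have hco : α * γ * (1 - η) * μ / (μ + ‖H‖) = α * γ * (1 - η) * lam := by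
    rw [hlamdef]; ring
  rw [hco]
  exact hgoal
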